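/- Define H : ℝ² → ℝ by H(x,y) = (1/2) e^{−2y} (y − x² + 1/2). Then H is a first integral of the planar system x' = x² − y, y' = x: for every differentiable solution (x,y) : I → ℝ² of this system on an interval I, the function t ↦ H(x(t), y(t)) is constant on I. -/

import Mathlib

/-- The constant of motion `H(x,y) = (1/2) e^{-2y} (y - x² + 1/2)` of the
chart-`K₂` canard system. -/
noncomputable def canardH (p : ℝ × ℝ) : ℝ :=
  (1 / 2) * Real.exp (-2 * p.2) * (p.2 - p.1 ^ 2 + 1 / 2)

/-- `H` is a first integral of the planar system
`x' = x² - y`, `y' = x`: along every differentiable solution on an interval `I`,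
the function `t ↦ H(x t, y t)` is constant. -/
theorem canardH_first_integral
    (I : Set ℝ) (hI : Convex ℝ I) (x y : ℝ → ℝ)
    (hx : ∀ t ∈ I, HasDerivAt x ((x t) ^ 2 - y t) t)
    (hy : ∀ t ∈ I, HasDerivAt y (x t) t) :
    ∀ s ∈ I, ∀ t ∈ I, canardH (x s, y s) = canardH (x t, y t) := by
  intro s hs t ht
  set F : ℝ → ℝ := fun u => canardH (x u, y u) with hF
  have hderiv : ∀ u ∈ I, HasDerivWithinAt F 0 I u := by
    intro u hu
    have hxu := hx u hu
    have hyu := hy u hu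
    have hexp : HasDerivAt (fun u => Real.exp (-2 * y u))
        (Real.exp (-2 * y u) * (-2 * x u)) u := ((hyu.const_mul (-2)).exp)
    have hg : HasDerivAt (fun u => y u - x u ^ 2 + 1 / 2)
        (x u - 2 * x u * (x u ^ 2 - y u)) u := by
      have := (hyu.sub ((hxu.pow 2))).add_const (1 / 2)
      refine this.congr_deriv ?_
      norm_num
    have h := ((hexp.mul hg).const_mul (1 / 2))
    have hzero : (1 / 2) * (Real.exp (-2 * y u) * (-2 * x u) * (y u - x u ^ 2 + 1 / 2)
        + Real.exp (-2 * y u) * (x u - 2 * x u * (x u ^ 2 - y u))) = 0 := by ring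
    have hF' : HasDerivAt F 0 u := by
      rw [← hzero]
      refine HasDerivAt.congr_deriv (HasDerivAt.congr_of_eventuallyEq h (Filter.Eventually.of_forall fun v => ?_)) rfl
      simp [hF, canardH]
      ring
    exact hF'.hasDerivWithinAt
  have key := hI.norm_image_sub_le_of_norm_hasDerivWithin_le
    (f := F) (f' := fun _ => 0) (C := 0)
    (fun u hu => (hderiv u hu).hasFDerivWithinAt)
    (fun u hu => by simp) ht hs
  have : ‖F s - F t‖ ≤ 0 := by simpa using key
  have := norm_sub_eq_zero_iff.mp (le_antisymm this (norm_nonneg _))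
  simpa [hF] using this
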